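/- arXiv:1309.6694 — 3 statements merged into one kernel-verified Lean document; each statement's English description precedes it below -/
import Mathlib

section
/- For Noetherian R-modules M and N over a ring R, the length of the direct sum is the natural sum of the lengths: len_R(M × N) = len_R(M) ♯ len_R(N). -/
namespace Ordinal

/-- Natural (Hessenberg) addition of ordinals, as in the older Mathlib
(`Mathlib.SetTheory.Ordinal.NaturalOps`, since removed). -/
noncomputable def nadd (a b : Ordinal.{u}) : Ordinal.{u} :=
  max (⨆ x : Set.Iio a, Order.succ (nadd x.1 b)) (⨆ x : Set.Iio b, Order.succ (nadd a x.1))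
termination_by (a, b)
decreasing_by all_goals cases x; decreasing_tactic

end Ordinal

infixl:65 " ♯ " => Ordinal.nadd

open Ordinal

universe u v

namespace Ordinal

theorem nadd_def' (a b : Ordinal.{u}) : a ♯ b =
    max (⨆ x : Set.Iio a, Order.succ (x.1 ♯ b)) (⨆ x : Set.Iio b, Order.succ (a ♯ x.1)) := by
  rw [nadd]

theorem nadd_lt_nadd_right {a b : Ordinal.{u}} (h : a < b) (c : Ordinal.{u}) : a ♯ c < b ♯ c := by
  rw [nadd_def' b c]
  refine lt_of_lt_of_le (Order.lt_succ _) (le_max_of_le_left ?_)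
  exact le_ciSup (f := fun x : Set.Iio b => Order.succ (x.1 ♯ c))
    Ordinal.bddAbove_of_small (⟨a, h⟩ : Set.Iio b)

theorem nadd_lt_nadd_left {b c : Ordinal.{u}} (h : b < c) (a : Ordinal.{u}) : a ♯ b < a ♯ c := by
  rw [nadd_def' a c]
  refine lt_of_lt_of_le (Order.lt_succ _) (le_max_of_le_right ?_)
  exact le_ciSup (f := fun x : Set.Iio c => Order.succ (a ♯ x.1))
    Ordinal.bddAbove_of_small (⟨b, h⟩ : Set.Iio c)

theorem nadd_le_nadd_right {a b : Ordinal.{u}} (h : a ≤ b) (c : Ordinal.{u}) : a ♯ c ≤ b ♯ c := by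
  rcases eq_or_lt_of_le h with rfl | h
  · exact le_rfl
  · exact (nadd_lt_nadd_right h c).le

theorem nadd_le_nadd_left {b c : Ordinal.{u}} (h : b ≤ c) (a : Ordinal.{u}) : a ♯ b ≤ a ♯ c := by
  rcases eq_or_lt_of_le h with rfl | h
  · exact le_rfl
  · exact (nadd_lt_nadd_left h a).le

theorem nadd_le_iff {a b c : Ordinal.{u}} :
    a ♯ b ≤ c ↔ (∀ a' < a, a' ♯ b < c) ∧ ∀ b' < b, a ♯ b' < c := by
  constructor
  · intro h
    exact ⟨fun a' ha => (nadd_lt_nadd_right ha b).trans_le h,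
      fun b' hb => (nadd_lt_nadd_left hb a).trans_le h⟩
  · rintro ⟨h1, h2⟩
    rw [nadd_def']
    exact max_le (Ordinal.iSup_le fun x => Order.succ_le_of_lt (h1 x.1 x.2))
      (Ordinal.iSup_le fun x => Order.succ_le_of_lt (h2 x.1 x.2))

end Ordinal

/-- The ordinal length of a Noetherian module: the foundation rank of the zero submodule
in the lattice of submodules ordered by reverse inclusion. -/
noncomputable def moduleLength (R : Type u) (M : Type v) [Ring R] [AddCommGroup M]
    [Module R M] [IsNoetherian R M] : Ordinal.{v} :=
  IsWellFounded.rank (α := Submodule R M) (· > ·) ⊥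

set_option linter.unusedSectionVars false

section Aux

lemma ML.exists_rank_ge {α : Type v} {r : α → α → Prop} [IsWellFounded α r] {a : α}
    {o : Ordinal.{v}} (h : o < IsWellFounded.rank r a) :
    ∃ b, r b a ∧ o ≤ IsWellFounded.rank r b := by
  rw [IsWellFounded.rank_eq, Ordinal.lt_iSup_iff] at h
  obtain ⟨⟨b, hb⟩, h⟩ := h
  exact ⟨b, hb, Order.lt_succ_iff.mp h⟩

variable {R : Type u} {M N : Type v} [Ring R] [AddCommGroup M] [Module R M]
  [AddCommGroup N] [Module R N] [IsNoetherian R M] [IsNoetherian R N]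

local notation "rk" => IsWellFounded.rank (· > ·)

lemma ML.rank_antitone {P : Type v} [AddCommGroup P] [Module R P] [IsNoetherian R P]
    {A B : Submodule R P} (h : A ≤ B) : rk B ≤ rk A := by
  rcases eq_or_lt_of_le h with rfl | h
  · exact le_rfl
  · exact (IsWellFounded.rank_lt_of_rel (r := (· > ·)) h).le

lemma ML.prod_lt_prod_left {A A' : Submodule R M} (B : Submodule R N) (h : A < A') :
    A.prod B < A'.prod B := by
  obtain ⟨x, hx, hxA⟩ := SetLike.exists_of_lt h
  refine lt_of_le_of_ne (Submodule.prod_mono h.le le_rfl) (fun he => hxA ?_)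
  have : (x, (0 : N)) ∈ A'.prod B := ⟨hx, B.zero_mem⟩
  rw [← he] at this
  exact this.1

lemma ML.prod_lt_prod_right (A : Submodule R M) {B B' : Submodule R N} (h : B < B') :
    A.prod B < A.prod B' := by
  obtain ⟨x, hx, hxB⟩ := SetLike.exists_of_lt h
  refine lt_of_le_of_ne (Submodule.prod_mono le_rfl h.le) (fun he => hxB ?_)
  have : ((0 : M), x) ∈ A.prod B' := ⟨A.zero_mem, hx⟩
  rw [← he] at this
  exact this.2

/-- Lower bound: rank of a product submodule is at least the natural sum of ranks. -/
lemma ML.nadd_le_rank_prod : ∀ (A : Submodule R M) (B : Submodule R N),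
    rk A ♯ rk B ≤ rk (A.prod B) := by
  have wfM : WellFounded ((· > ·) : Submodule R M → _ → Prop) := IsWellFounded.wf
  have wfN : WellFounded ((· > ·) : Submodule R N → _ → Prop) := IsWellFounded.wf
  suffices H : ∀ p : Submodule R M × Submodule R N, rk p.1 ♯ rk p.2 ≤ rk (p.1.prod p.2) by
    exact fun A B => H (A, B)
  intro p
  induction p using (wfM.prod_gameAdd wfN).induction with
  | _ p IH =>
  obtain ⟨A, B⟩ := p
  simp only
  rw [Ordinal.nadd_le_iff]
  constructor
  · intro a' ha'
    obtain ⟨A', hA', ha'le⟩ := ML.exists_rank_ge ha'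
    calc a' ♯ rk B ≤ rk A' ♯ rk B := Ordinal.nadd_le_nadd_right ha'le _
      _ ≤ rk (A'.prod B) := IH (A', B) (Prod.GameAdd.fst hA')
      _ < rk (A.prod B) :=
        IsWellFounded.rank_lt_of_rel (r := (· > ·)) (ML.prod_lt_prod_left B hA')
  · intro b' hb'
    obtain ⟨B', hB', hb'le⟩ := ML.exists_rank_ge hb'
    calc rk A ♯ b' ≤ rk A ♯ rk B' := Ordinal.nadd_le_nadd_left hb'le _
      _ ≤ rk (A.prod B') := IH (A, B') (Prod.GameAdd.snd hB')
      _ < rk (A.prod B) :=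
        IsWellFounded.rank_lt_of_rel (r := (· > ·)) (ML.prod_lt_prod_right A hB')

/-- Key strictness: if `C < C'` then the pair `(comap inl, map snd)` strictly increases
in at least one coordinate. -/
lemma ML.not_both_eq {C C' : Submodule R (M × N)} (h : C < C')
    (h1 : C.comap (LinearMap.inl R M N) = C'.comap (LinearMap.inl R M N))
    (h2 : C.map (LinearMap.snd R M N) = C'.map (LinearMap.snd R M N)) : False := by
  refine h.ne (le_antisymm h.le ?_)
  rintro ⟨m, n⟩ hx
  have hn : n ∈ C.map (LinearMap.snd R M N) := by
    rw [h2]; exact Submodule.mem_map.2 ⟨(m, n), hx, rfl⟩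
  obtain ⟨⟨m', n'⟩, hm'C, hn'⟩ := hn
  have hn2 : n' = n := hn'
  have hdiff : ((m - m', 0) : M × N) ∈ C' := by
    have : ((m, n) - (m', n') : M × N) ∈ C' := C'.sub_mem hx (h.le hm'C)
    simpa [hn2] using this
  have : m - m' ∈ C.comap (LinearMap.inl R M N) := by
    rw [h1]; simpa [Submodule.mem_comap] using hdiff
  have h3 : ((m - m', 0) : M × N) ∈ C := by simpa [Submodule.mem_comap] using this
  have hfin := C.add_mem h3 hm'C
  have heq : ((m - m', 0) + (m', n') : M × N) = (m, n) := by
    ext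
    · simp
    · simp [hn2]
  rwa [heq] at hfin

/-- Upper bound: the rank of any submodule of `M × N` is at most the natural sum of the
ranks of its "trace" on `M` and its image in `N`. -/
lemma ML.rank_le_nadd : ∀ C : Submodule R (M × N),
    rk C ≤ rk (C.comap (LinearMap.inl R M N)) ♯ rk (C.map (LinearMap.snd R M N)) := by
  intro C
  induction C using IsWellFounded.induction (α := Submodule R (M × N)) (· > ·) with
  | _ C IH =>
  rw [IsWellFounded.rank_eq]
  apply Ordinal.iSup_le
  rintro ⟨C', hC'⟩
  rw [Order.succ_le_iff]
  have key : rk (C'.comap (LinearMap.inl R M N)) ♯ rk (C'.map (LinearMap.snd R M N)) <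
      rk (C.comap (LinearMap.inl R M N)) ♯ rk (C.map (LinearMap.snd R M N)) := by
    have le1 : C.comap (LinearMap.inl R M N) ≤ C'.comap (LinearMap.inl R M N) :=
      Submodule.comap_mono hC'.le
    have le2 : C.map (LinearMap.snd R M N) ≤ C'.map (LinearMap.snd R M N) :=
      Submodule.map_mono hC'.le
    rcases lt_or_eq_of_le le1 with h1 | h1
    · calc rk (C'.comap (LinearMap.inl R M N)) ♯ rk (C'.map (LinearMap.snd R M N))
          ≤ rk (C'.comap (LinearMap.inl R M N)) ♯ rk (C.map (LinearMap.snd R M N)) :=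
            Ordinal.nadd_le_nadd_left (ML.rank_antitone le2) _
        _ < rk (C.comap (LinearMap.inl R M N)) ♯ rk (C.map (LinearMap.snd R M N)) :=
            Ordinal.nadd_lt_nadd_right (IsWellFounded.rank_lt_of_rel (r := (· > ·)) h1) _
    · have h2 : C.map (LinearMap.snd R M N) < C'.map (LinearMap.snd R M N) :=
        lt_of_le_of_ne le2 (fun he => ML.not_both_eq hC' h1 he)
      calc rk (C'.comap (LinearMap.inl R M N)) ♯ rk (C'.map (LinearMap.snd R M N))
          ≤ rk (C.comap (LinearMap.inl R M N)) ♯ rk (C'.map (LinearMap.snd R M N)) :=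
            Ordinal.nadd_le_nadd_right (ML.rank_antitone le1.ge.le) _
        _ < rk (C.comap (LinearMap.inl R M N)) ♯ rk (C.map (LinearMap.snd R M N)) :=
            Ordinal.nadd_lt_nadd_left (IsWellFounded.rank_lt_of_rel (r := (· > ·)) h2) _
  exact lt_of_le_of_lt (IH C' hC') key

end Aux

/-- The length of a direct sum is the natural (Hessenberg) sum of the lengths. -/
theorem moduleLength_prod (R : Type u) (M N : Type v) [Ring R] [AddCommGroup M] [Module R M]
    [AddCommGroup N] [Module R N] [IsNoetherian R M] [IsNoetherian R N] :
    moduleLength R (M × N) = moduleLength R M ♯ moduleLength R N := by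
  apply le_antisymm
  · have h := ML.rank_le_nadd (R := R) (M := M) (N := N) ⊥
    simpa [moduleLength, Submodule.comap_bot, Submodule.map_bot, Submodule.ker_inl] using h
  · have h := ML.nadd_le_rank_prod (R := R) (M := M) (N := N) ⊥ ⊥
    simpa [moduleLength, Submodule.prod_bot] using h
end

section
/- Parameter Criterion: Let R be a Noetherian ring of finite Krull dimension d and let f ∈ R be a non-unit. Then f is a parameter, i.e. the Krull dimension of R/fR is strictly less than d, if and only if the annihilator ideal ann_R(f) = { x ∈ R : f·x = 0 }, viewed as an R-module, has dimension at most d−1 (i.e. dim ann_R(f) < d). -/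
/-- If `n ≤ krullDim α` for a natural number `n`, there is an `LTSeries` of length `n`. -/
private lemma aux_exists_series_of_le_krullDim {α : Type*} [Preorder α] {n : ℕ}
    (h : (n : WithBot ℕ∞) ≤ Order.krullDim α) : ∃ p : LTSeries α, p.length = n := by
  have hne : Nonempty α := by
    by_contra hα
    rw [not_nonempty_iff] at hα
    rw [Order.krullDim_eq_bot] at h
    simp at h
  obtain ⟨p, hp⟩ : ∃ p : LTSeries α, n ≤ p.length := by
    by_contra hc
    push_neg at hc
    rcases Nat.eq_zero_or_pos n with rfl | hn
    · exact absurd (hc (RelSeries.singleton _ (Classical.arbitrary α))) (by simp)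
    · rw [Order.krullDim_eq_iSup_length] at h
      have hb : ∀ p : LTSeries α, (p.length : ℕ∞) ≤ ((n - 1 : ℕ) : ℕ∞) := by
        intro p
        have := Nat.le_pred_of_lt (hc p)
        exact_mod_cast this
      have h2 : (n : WithBot ℕ∞) ≤ ((n - 1 : ℕ) : WithBot ℕ∞) :=
        h.trans (by exact WithBot.coe_le_coe.mpr (iSup_le hb))
      have : n ≤ n - 1 := by exact_mod_cast h2
      omega
  exact ⟨p.take ⟨n, by omega⟩, by simp⟩

/-- The prime spectrum of `R ⧸ I` is order isomorphic to the zero locus of `I`. -/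
private noncomputable def auxQuotZeroLocusOrderIso {R : Type*} [CommRing R] (I : Ideal R) :
    PrimeSpectrum (R ⧸ I) ≃o PrimeSpectrum.zeroLocus (I : Set R) where
  toEquiv := Equiv.ofBijective
    (fun q => ⟨PrimeSpectrum.comap (Ideal.Quotient.mk I) q, fun x hx => by
      show Ideal.Quotient.mk I x ∈ q.asIdeal
      rw [Ideal.Quotient.eq_zero_iff_mem.mpr hx]
      exact zero_mem _⟩)
    ⟨fun a b hab => PrimeSpectrum.comap_injective_of_surjective _
        Ideal.Quotient.mk_surjective (congrArg Subtype.val hab),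
     fun p => by
      have hker : RingHom.ker (Ideal.Quotient.mk I) ≤ p.1.asIdeal := by
        rw [Ideal.mk_ker]; exact p.2
      haveI : (p.1.asIdeal.map (Ideal.Quotient.mk I)).IsPrime :=
        Ideal.map_isPrime_of_surjective Ideal.Quotient.mk_surjective hker
      refine ⟨⟨p.1.asIdeal.map (Ideal.Quotient.mk I), inferInstance⟩, ?_⟩
      apply Subtype.ext
      apply PrimeSpectrum.ext
      show Ideal.comap _ (Ideal.map _ _) = p.1.asIdeal
      rw [Ideal.comap_map_of_surjective _ Ideal.Quotient.mk_surjective,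
        ← RingHom.ker_eq_comap_bot, Ideal.mk_ker]
      exact sup_eq_left.mpr p.2⟩
  map_rel_iff' := by
    intro a b
    show Ideal.comap _ a.asIdeal ≤ Ideal.comap _ b.asIdeal ↔ a ≤ b
    rw [Ideal.comap_le_comap_iff_of_surjective _ Ideal.Quotient.mk_surjective]
    rfl

private lemma aux_ringKrullDim_quotient {R : Type*} [CommRing R] (I : Ideal R) :
    ringKrullDim (R ⧸ I) = Order.krullDim (PrimeSpectrum.zeroLocus (I : Set R)) :=
  Order.krullDim_eq_of_orderIso (auxQuotZeroLocusOrderIso I)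

/-- The head of a chain of primes of maximal length is a minimal prime. -/
private lemma aux_head_minimal {R : Type*} [CommRing R] {d : ℕ} (hd : ringKrullDim R = d)
    (c : LTSeries (PrimeSpectrum R)) (hc : c.length = d) :
    c.head.asIdeal ∈ minimalPrimes R := by
  obtain ⟨p, hp, hle⟩ := Ideal.exists_minimalPrimes_le (bot_le : ⊥ ≤ c.head.asIdeal)
  rcases eq_or_lt_of_le hle with rfl | hlt
  · exact hp
  · haveI : p.IsPrime := hp.1.1
    have hlt' : (⟨p, hp.1.1⟩ : PrimeSpectrum R) < c.head := hlt
    have := Order.LTSeries.length_le_krullDim (c.cons ⟨p, hp.1.1⟩ hlt')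
    rw [show ringKrullDim R = Order.krullDim (PrimeSpectrum R) from rfl] at hd
    rw [hd, RelSeries.cons_length, hc] at this
    have h2 : (d : ℕ∞) + 1 ≤ (d : ℕ∞) := by exact_mod_cast this
    have h3 : (d : ℕ∞) < d := (ENat.add_one_le_iff (by simp)).mp h2
    exact absurd h3 (lt_irrefl _)

/-- For a minimal prime `p₀` containing `f`, there is `x` with `f * x = 0` whose annihilator
is contained in `p₀`. -/
private lemma aux_exists_ann_le {R : Type*} [CommRing R] {p₀ : Ideal R}
    (hmin : p₀ ∈ minimalPrimes R) {f : R} (hf : f ∈ p₀) :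
    ∃ x : R, f * x = 0 ∧ (Submodule.span R {x}).annihilator ≤ p₀ := by
  classical
  haveI hp : p₀.IsPrime := hmin.1.1
  have h1 : IsNilpotent (algebraMap R (Localization p₀.primeCompl) f) := by
    haveI : Ring.KrullDimLE 0 (Localization p₀.primeCompl) := .of_isLocalization _ hmin _
    rw [Ring.KrullDimLE.isNilpotent_iff_mem_nonunits, mem_nonunits_iff]
    intro hu
    rw [IsLocalization.AtPrime.isUnit_to_map_iff (Localization p₀.primeCompl) p₀ f] at hu
    exact hu hf
  obtain ⟨n, hn⟩ := h1
  rw [← map_pow] at hn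
  obtain ⟨m, hm⟩ := (IsLocalization.map_eq_zero_iff p₀.primeCompl
    (Localization p₀.primeCompl) (f ^ n)).mp hn
  have hex : ∃ k : ℕ, ∃ t : R, t ∉ p₀ ∧ t * f ^ k = 0 := ⟨n, m, m.2, hm⟩
  obtain ⟨t, ht, ht0⟩ := Nat.find_spec hex
  have hk1 : 1 ≤ Nat.find hex := by
    rcases Nat.eq_zero_or_pos (Nat.find hex) with h0 | h1
    · exfalso
      rw [h0, pow_zero, mul_one] at ht0
      exact ht (ht0 ▸ p₀.zero_mem)
    · exact h1
  refine ⟨t * f ^ (Nat.find hex - 1), ?_, ?_⟩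
  · have : f * (t * f ^ (Nat.find hex - 1)) = t * f ^ (Nat.find hex - 1 + 1) := by ring
    rw [this, Nat.sub_add_cancel hk1]
    exact ht0
  · intro g hg
    rw [Submodule.mem_annihilator_span_singleton, smul_eq_mul] at hg
    by_contra hg'
    have hmem : g * t ∉ p₀ := fun h => ((hp.mem_or_mem h).elim hg' ht)
    have : g * t * f ^ (Nat.find hex - 1) = 0 := by
      rw [show g * t * f ^ (Nat.find hex - 1) = g * (t * f ^ (Nat.find hex - 1)) from by ring]
      exact hg
    exact Nat.find_min hex (by omega) ⟨g * t, hmem, this⟩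

/-- If `f * x = 0` and the annihilator of `x` is contained in `q`, then `q` lies in the
support of `ann (f)`. -/
private lemma aux_mem_support {R : Type*} [CommRing R] {f x : R} (hfx : f * x = 0)
    {q : PrimeSpectrum R} (hq : (Submodule.span R {x}).annihilator ≤ q.asIdeal) :
    q ∈ Module.support R ↥((Ideal.span {f} : Ideal R).annihilator) := by
  rw [Module.mem_support_iff_exists_annihilator]
  have hx : x ∈ (Ideal.span {f} : Ideal R).annihilator := by
    rw [Submodule.mem_annihilator]
    intro y hy
    obtain ⟨c, rfl⟩ := Ideal.mem_span_singleton'.mp hy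
    show x * (c * f) = 0
    calc x * (c * f) = c * (f * x) := by ring
    _ = 0 := by rw [hfx, mul_zero]
  refine ⟨⟨x, hx⟩, le_trans ?_ hq⟩
  intro r hr
  rw [Submodule.mem_annihilator_span_singleton] at hr ⊢
  have := congrArg Subtype.val hr
  simpa using this

/-- `f` lies in every prime in the support of `ann (f)`. -/
private lemma aux_mem_of_mem_support {R : Type*} [CommRing R] {f : R} {q : PrimeSpectrum R}
    (hq : q ∈ Module.support R ↥((Ideal.span {f} : Ideal R).annihilator)) :
    f ∈ q.asIdeal := by
  apply Module.annihilator_le_of_mem_support hq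
  rw [Module.mem_annihilator]
  intro m
  apply Subtype.ext
  have hm := (Submodule.mem_annihilator).mp m.2 f (Ideal.mem_span_singleton_self f)
  simpa [smul_eq_mul, mul_comm] using hm

/-- **Parameter Criterion.** Let `R` be a Noetherian ring of finite Krull dimension `d` and
`f ∈ R` a non-unit. Then `f` is a parameter (i.e. `dim R/fR < d`) if and only if the
annihilator ideal `ann_R(f)`, viewed as an `R`-module, has dimension `< d`. -/
theorem parameter_criterion {R : Type*} [CommRing R] [IsNoetherianRing R] (d : ℕ)
    (hd : ringKrullDim R = d) (f : R) (hf : ¬ IsUnit f) :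
    ringKrullDim (R ⧸ Ideal.span {f}) < (d : WithBot ℕ∞) ↔
      Order.krullDim (Module.support R ↥((Ideal.span {f} : Ideal R).annihilator)) <
        (d : WithBot ℕ∞) := by
  classical
  rw [aux_ringKrullDim_quotient (Ideal.span {f})]
  rw [← not_le, ← not_le]
  apply not_congr
  constructor
  · -- from a chain in the zero locus to a chain in the support
    intro h
    obtain ⟨c, hc⟩ := aux_exists_series_of_le_krullDim h
    let c' : LTSeries (PrimeSpectrum R) := c.map Subtype.val fun _ _ h => h
    have hc' : c'.length = d := hc
    have hmin : c'.head.asIdeal ∈ minimalPrimes R := aux_head_minimal hd c' hc'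
    have hfhead : f ∈ c'.head.asIdeal := by
      have := c.head.2
      rw [PrimeSpectrum.mem_zeroLocus] at this
      exact this (Ideal.mem_span_singleton_self f)
    obtain ⟨x, hfx, hann⟩ := aux_exists_ann_le hmin hfhead
    have hmem : ∀ i, c' i ∈ Module.support R ↥((Ideal.span {f} : Ideal R).annihilator) := by
      intro i
      refine aux_mem_support hfx (le_trans hann ?_)
      exact c'.strictMono.monotone (Fin.zero_le i)
    let c'' : LTSeries (Module.support R ↥((Ideal.span {f} : Ideal R).annihilator)) :=
      { length := c'.length
        toFun := fun i => ⟨c' i, hmem i⟩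
        step := fun i => c'.step i }
    have := Order.LTSeries.length_le_krullDim c''
    have hlen : c''.length = d := hc'
    rw [hlen] at this
    exact this
  · -- from a chain in the support to a chain in the zero locus
    intro h
    obtain ⟨c, hc⟩ := aux_exists_series_of_le_krullDim h
    let c' : LTSeries (PrimeSpectrum R) := c.map Subtype.val fun _ _ h => h
    have hmem : ∀ i, c' i ∈ PrimeSpectrum.zeroLocus ((Ideal.span {f} : Ideal R) : Set R) := by
      intro i
      rw [PrimeSpectrum.mem_zeroLocus]
      have hfq : f ∈ (c' i).asIdeal := aux_mem_of_mem_support (c i).2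
      intro y hy
      obtain ⟨a, rfl⟩ := Ideal.mem_span_singleton'.mp hy
      exact Ideal.mul_mem_left _ a hfq
    let c'' : LTSeries (PrimeSpectrum.zeroLocus ((Ideal.span {f} : Ideal R) : Set R)) :=
      { length := c'.length
        toFun := fun i => ⟨c' i, hmem i⟩
        step := fun i => c'.step i }
    have := Order.LTSeries.length_le_krullDim c''
    have hlen : c''.length = d := hc
    rw [hlen] at this
    exact this
end

section
/- Ping-pong degradation: Let R be a Noetherian ring of finite Krull dimension and let M and N be finitely generated R-modules such that M is torsion-free as an abelian group (no nonzero element of M is killed by a nonzero integer) and M and N have no associated primes in common (Ass(M) ∩ Ass(N) = ∅). Then there exists k ∈ ℕ such that for every choice of R-linear maps f_1, …, f_k : M → N and g_1, …, g_k : N → M, the composition g_k ∘ f_k ∘ ⋯ ∘ g_1 ∘ f_1 is the zero endomorphism of M. -/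
universe u

open Submodule in
lemma pingpong_one_not_mem_of_prime {R : Type u} [CommRing R] {p : Ideal R} (hp : p.IsPrime) :
    (1 : R) ∉ p := fun h => hp.ne_top (Ideal.eq_top_of_isUnit_mem p h isUnit_one)

/-- Minimal-prime-style lemma: a prime containing the annihilator of an element contains an
associated prime which still contains that annihilator. -/
lemma pingpong_exists_isAssociatedPrime_le {R M : Type u} [CommRing R] [IsNoetherianRing R]
    [AddCommGroup M] [Module R M] (p : Ideal R) (hp : p.IsPrime) (x : M)
    (hx : (Submodule.span R {x}).annihilator ≤ p) :
    ∃ P : Ideal R, IsAssociatedPrime P M ∧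
      (Submodule.span R {x}).annihilator ≤ P ∧ P ≤ p := by
  classical
  -- the saturated annihilator of `y` at `p`
  let J : M → Ideal R := fun y =>
    { carrier := {r | ∃ s ∉ p, (s * r) • y = 0}
      zero_mem' := ⟨1, pingpong_one_not_mem_of_prime hp, by simp⟩
      add_mem' := by
        rintro a b ⟨s, hs, hsa⟩ ⟨t, ht, htb⟩
        refine ⟨s * t, fun h => ((hp.mem_or_mem h).elim hs ht), ?_⟩
        have h1 : (s * t) * (a + b) = t * (s * a) + s * (t * b) := by ring
        rw [h1, add_smul, mul_smul t (s * a), mul_smul s (t * b), hsa, htb,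
          smul_zero, smul_zero, add_zero]
      smul_mem' := by
        rintro c a ⟨s, hs, hsa⟩
        refine ⟨s, hs, ?_⟩
        have h1 : s * (c • a) = c * (s * a) := by simp only [smul_eq_mul]; ring
        rw [h1, mul_smul c (s * a), hsa, smul_zero] }
  have hmemJ : ∀ (y : M) (r : R), r ∈ J y ↔ ∃ s ∉ p, (s * r) • y = 0 :=
    fun y r => Iff.rfl
  have hannJ : ∀ y : M, (Submodule.span R {y}).annihilator ≤ J y := by
    intro y r hr
    rw [Submodule.mem_annihilator_span_singleton] at hr
    exact ⟨1, pingpong_one_not_mem_of_prime hp, by rw [one_mul, hr]⟩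
  have hJxp : J x ≤ p := by
    intro r hr
    obtain ⟨s, hs, hsr⟩ := hr
    have h2 : s * r ∈ (Submodule.span R {x}).annihilator :=
      (Submodule.mem_annihilator_span_singleton _ _).mpr hsr
    exact ((hp.mem_or_mem (hx h2)).elim (fun h => absurd h hs) id)
  obtain ⟨I, ⟨y₀, hIy₀, hIp, hxI⟩, hmax⟩ :=
    set_has_maximal_iff_noetherian.mpr ‹IsNoetherianRing R›
      { I : Ideal R | ∃ y : M, I = J y ∧ I ≤ p ∧
          (Submodule.span R {x}).annihilator ≤ I }
      ⟨J x, x, rfl, hJxp, hannJ x⟩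
  -- I = J y₀ is prime
  have hIprime : Ideal.IsPrime I := by
    constructor
    · exact fun h => hp.ne_top (top_le_iff.mp (h ▸ hIp))
    · intro a b hab
      rw [or_iff_not_imp_right]
      intro hb
      have hJle : I ≤ J (b • y₀) := by
        intro r hr
        rw [hIy₀, hmemJ] at hr
        obtain ⟨s, hs, hsr⟩ := hr
        exact ⟨s, hs, by rw [smul_comm, hsr, smul_zero]⟩
      have hJp : J (b • y₀) ≤ p := by
        intro r hr
        by_contra hrp
        obtain ⟨t, ht, htr⟩ := hr
        apply hb
        rw [hIy₀, hmemJ]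
        refine ⟨t * r, fun h => ((hp.mem_or_mem h).elim ht hrp), ?_⟩
        rw [mul_smul (t * r) b y₀]
        exact htr
      have hJmem : J (b • y₀) ∈
          { I : Ideal R | ∃ y : M, I = J y ∧ I ≤ p ∧
            (Submodule.span R {x}).annihilator ≤ I } :=
        ⟨b • y₀, rfl, hJp, le_trans hxI hJle⟩
      have hEq : I = J (b • y₀) := by
        by_contra h
        exact hmax _ hJmem (lt_of_le_of_ne hJle h)
      rw [hIy₀, hmemJ] at hab
      obtain ⟨s, hs, hsab⟩ := hab
      rw [hEq, hmemJ]
      refine ⟨s, hs, ?_⟩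
      rw [smul_smul, mul_assoc]
      exact hsab
  -- I equals the annihilator of an actual element
  obtain ⟨S, hS⟩ : I.FG := (isNoetherian_def.mp ‹IsNoetherianRing R›) I
  let φ : R → R := fun r =>
    if h : ∃ s, s ∉ p ∧ (s * r) • y₀ = 0 then h.choose else 1
  have hφ : ∀ r : R, φ r ∉ p ∧ (r ∈ J y₀ → (φ r * r) • y₀ = 0) := by
    intro r
    by_cases h : ∃ s, s ∉ p ∧ (s * r) • y₀ = 0
    · have hc := h.choose_spec
      constructor
      · simpa only [φ, dif_pos h] using hc.1
      · intro _; simpa only [φ, dif_pos h] using hc.2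
    · constructor
      · simpa only [φ, dif_neg h] using pingpong_one_not_mem_of_prime hp
      · intro hr
        obtain ⟨s, hs, hsr⟩ := (hmemJ y₀ r).mp hr
        exact absurd ⟨s, ⟨hs, hsr⟩⟩ h
  have ht : (∏ r ∈ S, φ r) ∉ p := by
    intro h
    obtain ⟨r, _, hr⟩ := Ideal.IsPrime.prod_mem_iff.mp h
    exact (hφ r).1 hr
  refine ⟨I, ⟨hIprime, (∏ r ∈ S, φ r) • y₀, ?_⟩, hxI, hIp⟩
  rw [Submodule.bot_colon']
  suffices hsuff : I = (Submodule.span R {(∏ r ∈ S, φ r) • y₀}).annihilator by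
    rw [← hsuff, hIprime.radical]
  apply le_antisymm
  · rw [← hS, Submodule.span_le]
    intro r hr
    have hrI : (r : R) ∈ I := hS ▸ Submodule.subset_span hr
    rw [SetLike.mem_coe, Submodule.mem_annihilator_span_singleton]
    rw [smul_smul, ← Finset.mul_prod_erase S φ hr]
    have heq : r * (φ r * ∏ s ∈ S.erase r, φ s)
        = (∏ s ∈ S.erase r, φ s) * (φ r * r) := by ring
    rw [heq, mul_smul, (hφ r).2 (hIy₀ ▸ hrI), smul_zero]
  · intro r hr
    rw [Submodule.mem_annihilator_span_singleton] at hr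
    rw [hIy₀, hmemJ]
    refine ⟨∏ r ∈ S, φ r, ht, ?_⟩
    rw [mul_comm, mul_smul]
    exact hr

/-- From a nonvanishing ping-pong composition of length `k` one can build a strictly
increasing chain of `2 * k + 1` primes ending at any associated prime of `M` above the
annihilator of the resulting element. -/
lemma pingpong_chain {R M N : Type u} [CommRing R] [IsNoetherianRing R]
    [AddCommGroup M] [Module R M] [AddCommGroup N] [Module R N]
    (hass : associatedPrimes R M ∩ associatedPrimes R N = ∅) :
    ∀ (k : ℕ) (f : Fin k → (M →ₗ[R] N)) (g : Fin k → (N →ₗ[R] M)) (x : M)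
      (p : PrimeSpectrum R), p.asIdeal ∈ associatedPrimes R M →
      (Submodule.span R
        {(List.ofFn fun i => ((g i) ∘ₗ (f i) : Module.End R M)).prod x}).annihilator
          ≤ p.asIdeal →
      ∃ c : LTSeries (PrimeSpectrum R), c.length = 2 * k ∧ c.last = p := by
  intro k
  induction k with
  | zero =>
    intro f g x p hp hann
    exact ⟨RelSeries.singleton _ p, by simp, RelSeries.last_singleton _⟩
  | succ k ih =>
    intro f g x p hp hann
    have hdisj : ∀ q : Ideal R, q ∈ associatedPrimes R M → q ∈ associatedPrimes R N → False := by
      intro q h1 h2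
      have : q ∈ associatedPrimes R M ∩ associatedPrimes R N := ⟨h1, h2⟩
      rw [hass] at this
      exact this
    set z' : M := (List.ofFn fun i : Fin k =>
      ((g i.succ) ∘ₗ (f i.succ) : Module.End R M)).prod x with hz'
    have hsplit : (List.ofFn fun i : Fin (k+1) =>
        ((g i) ∘ₗ (f i) : Module.End R M)).prod x = (g 0) ((f 0) z') := by
      rw [List.ofFn_succ, List.prod_cons]
      rfl
    rw [hsplit] at hann
    -- annihilator of w := f 0 z' is below p
    have hannw : (Submodule.span R {(f 0) z'}).annihilator ≤ p.asIdeal := by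
      refine le_trans ?_ hann
      intro r hr
      rw [Submodule.mem_annihilator_span_singleton] at hr ⊢
      rw [← map_smul, hr, map_zero]
    obtain ⟨Q, hQass, hQw, hQp⟩ :=
      pingpong_exists_isAssociatedPrime_le p.asIdeal p.isPrime ((f 0) z') hannw
    have hQlt : Q < p.asIdeal :=
      lt_of_le_of_ne hQp (fun h => hdisj _ (h ▸ hp) (h ▸ hQass))
    have hannz' : (Submodule.span R {z'}).annihilator ≤ Q := by
      refine le_trans ?_ hQw
      intro r hr
      rw [Submodule.mem_annihilator_span_singleton] at hr ⊢
      rw [← map_smul, hr, map_zero]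
    obtain ⟨P, hPass, hPz', hPQ⟩ :=
      pingpong_exists_isAssociatedPrime_le Q hQass.isPrime z' hannz'
    have hPlt : P < Q :=
      lt_of_le_of_ne hPQ (fun h => hdisj _ hPass (h ▸ hQass))
    obtain ⟨c, hclen, hclast⟩ := ih (fun i => f i.succ) (fun i => g i.succ) x
      ⟨P, hPass.isPrime⟩ hPass (hz' ▸ hPz')
    refine ⟨(c.snoc ⟨Q, hQass.isPrime⟩ ?_).snoc p ?_, ?_, ?_⟩
    · rw [hclast]
      exact (PrimeSpectrum.asIdeal_lt_asIdeal _ _).mp hPlt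
    · rw [RelSeries.last_snoc]
      exact (PrimeSpectrum.asIdeal_lt_asIdeal _ _).mp hQlt
    · simp only [RelSeries.snoc_length, hclen]
      ring
    · rw [RelSeries.last_snoc]

/-- **Ping-pong degradation.** If `M` and `N` are finitely generated modules over a Noetherian
ring of finite Krull dimension, `M` is `ℤ`-torsion-free, and `M`, `N` have no associated primes
in common, then there is `k` such that every composition
`g_k ∘ f_k ∘ ⋯ ∘ g_1 ∘ f_1` with `f_i : M → N`, `g_i : N → M` vanishes. -/
theorem pingpong_degradation (R M N : Type u) [CommRing R] [IsNoetherianRing R]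
    [AddCommGroup M] [Module R M] [Module.Finite R M]
    [AddCommGroup N] [Module R N] [Module.Finite R N]
    (hfin : ringKrullDim R ≠ ⊤)
    (htf : ∀ (n : ℤ) (x : M), n ≠ 0 → n • x = 0 → x = 0)
    (hass : associatedPrimes R M ∩ associatedPrimes R N = ∅) :
    ∃ k : ℕ, ∀ (f : Fin k → (M →ₗ[R] N)) (g : Fin k → (N →ₗ[R] M)),
      (List.ofFn fun i => ((g i) ∘ₗ (f i) : Module.End R M)).prod = 0 := by
  obtain ⟨n, hn⟩ : ∃ n : ℕ, ringKrullDim R ≤ n := by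
    rcases h : ringKrullDim R with _ | (_ | m)
    · exact ⟨0, bot_le⟩
    · exact absurd h hfin
    · exact ⟨m, by exact_mod_cast le_refl _⟩
  refine ⟨n + 1, fun f g => ?_⟩
  by_contra hne
  obtain ⟨x, hx⟩ := DFunLike.ne_iff.mp hne
  rw [LinearMap.zero_apply] at hx
  obtain ⟨P, hPass, hPle⟩ :=
    exists_le_isAssociatedPrime_of_isNoetherianRing R _ hx
  obtain ⟨c, hclen, -⟩ :=
    pingpong_chain hass (n + 1) f g x ⟨P, hPass.isPrime⟩ hPass (by rwa [Submodule.bot_colon'] at hPle)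
  have h1 : ((2 * (n + 1) : ℕ) : WithBot (WithTop ℕ)) ≤ (n : ℕ) := by
    rw [← hclen]
    exact le_trans (Order.LTSeries.length_le_krullDim c) hn
  have h2 : 2 * (n + 1) ≤ n := by exact_mod_cast h1
  omega
end
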